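/- Let G be a finite group and g ∈ G. Then g lies in no minimal generating set of G of size at least 2 if and only if either G = ⟨g⟩ or g belongs to the Frattini subgroup Φ(G). -/
import Mathlib

open Subgroup

lemma notMem_frattini_iff {G : Type*} [Group G] {g : G} :
    g ∉ frattini G ↔ ∃ M : Subgroup G, IsCoatom M ∧ g ∉ M := by
  simp [frattini, Order.radical, Subgroup.mem_iInf]

/-- In a finite group `G`, `g` lies in no minimal generating set of
size at least 2 iff `G = ⟨g⟩` or `g ∈ Φ(G)`. -/
theorem isolated_in_independence_graph_iff_finite
    {G : Type*} [Group G] [Finite G] (g : G) :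
    (¬ ∃ Y : Finset G, g ∈ Y ∧ 2 ≤ Y.card ∧
        Subgroup.closure (Y : Set G) = ⊤ ∧
        ∀ Z : Finset G, Z ⊂ Y → Subgroup.closure (Z : Set G) ≠ ⊤) ↔
      (Subgroup.zpowers g = ⊤ ∨ g ∈ frattini G) := by
  classical
  constructor
  · -- forward: contrapositive
    intro h
    by_contra hc
    push_neg at hc
    obtain ⟨hg1, hg2⟩ := hc
    obtain ⟨M, hM, hgM⟩ := notMem_frattini_iff.mp hg2
    apply h
    -- finite generating set for M
    have hMfin : (M : Set G).Finite := Set.toFinite _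
    set S : Finset G := hMfin.toFinset with hS
    have hSM : (S : Set G) = (M : Set G) := hMfin.coe_toFinset
    have hclS : Subgroup.closure (S : Set G) = M := by
      rw [hSM]; exact Subgroup.closure_eq M
    have hgS : g ∉ S := by simpa [hS] using hgM
    -- closure (insert g S) = ⊤ since M is a coatom
    have htop : Subgroup.closure ((insert g S : Finset G) : Set G) = ⊤ := by
      apply hM.2
      rw [lt_iff_le_and_ne]
      constructor
      · rw [← hclS]
        apply Subgroup.closure_mono
        intro x hx
        simp only [Finset.coe_insert, Set.mem_insert_iff]
        exact Or.inr (by exact_mod_cast hx)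
      · intro hEq
        exact hgM (hEq ▸ Subgroup.subset_closure (by simp))
    -- candidates: subsets T of S with closure (insert g T) = ⊤
    set C : Finset (Finset G) := S.powerset.filter
      (fun T => Subgroup.closure ((insert g T : Finset G) : Set G) = ⊤) with hC
    have hSC : S ∈ C := by
      simp only [hC, Finset.mem_filter, Finset.mem_powerset]
      exact ⟨le_refl S, htop⟩
    obtain ⟨T, hTC, hTmin⟩ := Finset.exists_min_image C Finset.card ⟨S, hSC⟩
    simp only [hC, Finset.mem_filter, Finset.mem_powerset] at hTC
    obtain ⟨hTS, hTtop⟩ := hTC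
    have hgT : g ∉ T := fun h => hgS (hTS h)
    have hTne : T ≠ ∅ := by
      rintro rfl
      apply hg1
      rw [Subgroup.zpowers_eq_closure]
      simpa using hTtop
    refine ⟨insert g T, Finset.mem_insert_self g T, ?_, hTtop, ?_⟩
    · rw [Finset.card_insert_of_notMem hgT]
      have := Finset.card_pos.mpr (Finset.nonempty_of_ne_empty hTne)
      omega
    · intro Z hZ
      by_cases hgZ : g ∈ Z
      · have hZe : insert g (Z.erase g) = Z := Finset.insert_erase hgZ
        have hsub : Z.erase g ⊆ T := by
          intro x hx
          obtain ⟨hxg, hxZ⟩ := Finset.mem_erase.mp hx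
          rcases Finset.mem_insert.mp (hZ.1 hxZ) with h | h
          · exact absurd h hxg
          · exact h
        have hne : Z.erase g ≠ T := by
          rintro rfl
          exact hZ.2 (le_of_eq hZe)
        have hcard : (Z.erase g).card < T.card :=
          Finset.card_lt_card (lt_of_le_of_ne hsub hne)
        intro htop'
        have : Z.erase g ∈ C := by
          simp only [hC, Finset.mem_filter, Finset.mem_powerset]
          refine ⟨hsub.trans hTS, ?_⟩
          rw [hZe]; exact htop'
        exact absurd (hTmin _ this) (by omega)
      · have hsub : (Z : Set G) ⊆ (S : Set G) := by
          intro x hx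
          have hxZ : x ∈ Z := by exact_mod_cast hx
          rcases Finset.mem_insert.mp (hZ.1 hxZ) with h | h
          · exact absurd (h ▸ hxZ) hgZ
          · exact_mod_cast hTS h
        intro htop'
        have : (⊤ : Subgroup G) ≤ M := by
          rw [← htop', ← hclS]
          exact Subgroup.closure_mono hsub
        exact hM.1 (top_le_iff.mp this)
  · rintro (h | h) ⟨Y, hgY, hcard, hgen, hmin⟩
    · -- G = ⟨g⟩ : remove any other element
      obtain ⟨x, hxY, hxg⟩ : ∃ x ∈ Y, x ≠ g := by
        by_contra hc
        push_neg at hc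
        have : Y ⊆ {g} := fun y hy => Finset.mem_singleton.mpr (hc y hy)
        have := Finset.card_le_card this
        simp at this; omega
      refine hmin (Y.erase x) (Finset.erase_ssubset hxY) ?_
      have : Subgroup.zpowers g ≤ Subgroup.closure ((Y.erase x : Finset G) : Set G) := by
        rw [Subgroup.zpowers_eq_closure]
        apply Subgroup.closure_mono
        simp [Set.singleton_subset_iff, Finset.mem_erase, hxg.symm, hgY]
      rw [h] at this
      exact top_le_iff.mp this
    · -- g ∈ Φ(G) : remove g
      refine hmin (Y.erase g) (Finset.erase_ssubset hgY) ?_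
      apply frattini_nongenerating
      rw [eq_top_iff, ← hgen]
      apply Subgroup.closure_le _ |>.mpr
      intro y hy
      rcases eq_or_ne y g with rfl | hne
      · exact Subgroup.mem_sup_right h
      · exact Subgroup.mem_sup_left (Subgroup.subset_closure (by simpa [Finset.mem_erase, hne] using hy))
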